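/- For a finite set Y, full-support distribution q, and fixed x ∈ ℝ^Y, the map λ ↦ g_q(x;λ) := −(1/λ)·log(Σ_y q(y)·exp(−λ·x(y))) is weakly decreasing on (0,∞); moreover its derivative with respect to λ equals −(1/λ²)·D_KL(p_{q,λ}‖q), where p_{q,λ}(y) ∝ q(y)·exp(−λ·x(y)). In particular, if x is non-constant, the map is strictly decreasing. -/

import Mathlib

/-- the map `λ ↦ g_q(x;λ)` is weakly decreasing on `(0,∞)`, its
derivative equals `−(1/λ²)·D_KL(p_{q,λ}‖q)` where `p_{q,λ}(y) ∝ q(y)·exp(−λ·x(y))`,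
and it is strictly decreasing when `x` is non-constant. -/
theorem entropic_certainty_equivalent_antitone_in_lambda
    {Y : Type*} [Fintype Y] [Nonempty Y] (hY : 2 ≤ Fintype.card Y)
    (q : Y → ℝ) (hq_pos : ∀ y, 0 < q y) (hq_sum : ∑ y, q y = 1)
    (x : Y → ℝ) :
    let g : ℝ → ℝ := fun l => -(1 / l) * Real.log (∑ y, q y * Real.exp (-l * x y))
    let p : ℝ → Y → ℝ := fun l y =>
      q y * Real.exp (-l * x y) / ∑ z, q z * Real.exp (-l * x z)
    let KL : ℝ → ℝ := fun l => ∑ y, p l y * Real.log (p l y / q y)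
    AntitoneOn g (Set.Ioi 0) ∧
      (∀ l : ℝ, 0 < l → HasDerivAt g (-(1 / l ^ 2) * KL l) l) ∧
      ((∃ y z : Y, x y ≠ x z) → StrictAntiOn g (Set.Ioi 0)) := by
  intro g p KL
  set Z : ℝ → ℝ := fun l => ∑ y, q y * Real.exp (-l * x y) with hZdef
  set Z' : ℝ → ℝ := fun l => ∑ y, q y * (Real.exp (-l * x y) * -(x y)) with hZ'def
  have hp : ∀ (l : ℝ) (y : Y), p l y = q y * Real.exp (-l * x y) / Z l := fun _ _ => rfl
  have hZpos : ∀ l, 0 < Z l := fun l =>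
    Finset.sum_pos (fun y _ => mul_pos (hq_pos y) (Real.exp_pos _)) Finset.univ_nonempty
  have hZd : ∀ l, HasDerivAt Z (Z' l) l := by
    intro l
    apply HasDerivAt.fun_sum
    intro y _
    have h1 : HasDerivAt (fun l : ℝ => -l * x y) (-(x y)) l := by
      simpa using ((hasDerivAt_id l).neg.mul_const (x y))
    exact h1.exp.const_mul (q y)
  have hpq : ∀ (l : ℝ) (y : Y), p l y / q y = Real.exp (-l * x y) / Z l := by
    intro l y
    have hqne : q y ≠ 0 := (hq_pos y).ne'
    have hZne : Z l ≠ 0 := (hZpos l).ne'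
    rw [hp]
    field_simp
  -- KL formula
  have hKLeq : ∀ l : ℝ, 0 < l → KL l = l * (Z' l / Z l) - Real.log (Z l) := by
    intro l hl
    have hZne : Z l ≠ 0 := (hZpos l).ne'
    have hterm : ∀ y, p l y * Real.log (p l y / q y) =
        l * (q y * (Real.exp (-l * x y) * -(x y))) / Z l - p l y * Real.log (Z l) := by
      intro y
      rw [hpq l y, Real.log_div (Real.exp_ne_zero _) hZne, Real.log_exp, hp]
      ring
    calc KL l = ∑ y, (l * (q y * (Real.exp (-l * x y) * -(x y))) / Z l
          - p l y * Real.log (Z l)) := Finset.sum_congr rfl (fun y _ => hterm y)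
      _ = (∑ y, l * (q y * (Real.exp (-l * x y) * -(x y)))) / Z l
          - (∑ y, p l y) * Real.log (Z l) := by
          rw [Finset.sum_sub_distrib, Finset.sum_div, Finset.sum_mul]
      _ = l * Z' l / Z l - 1 * Real.log (Z l) := by
          congr 1
          · rw [← Finset.mul_sum]
          · congr 1
            simp only [hp]
            rw [← Finset.sum_div, div_eq_one_iff_eq hZne]
      _ = l * (Z' l / Z l) - Real.log (Z l) := by ring
  -- derivative
  have hd : ∀ l : ℝ, 0 < l → HasDerivAt g (-(1 / l ^ 2) * KL l) l := by
    intro l hl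
    have hlne : l ≠ 0 := hl.ne'
    have hlog : HasDerivAt (fun l => Real.log (Z l)) (Z' l / Z l) l :=
      (hZd l).log (hZpos l).ne'
    have hinv : HasDerivAt (fun l : ℝ => -(1 / l)) (1 / l ^ 2) l := by
      have := (hasDerivAt_inv hlne).fun_neg
      simpa [one_div] using this
    have hmul := hinv.mul hlog
    have heq : 1 / l ^ 2 * Real.log (Z l) + -(1 / l) * (Z' l / Z l)
        = -(1 / l ^ 2) * KL l := by
      rw [hKLeq l hl]
      have hZne : Z l ≠ 0 := (hZpos l).ne'
      field_simp
      ring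
    rw [← heq]
    exact hmul
  -- KL nonneg / pos
  have hsum1 : ∀ l : ℝ, ∑ y, q y • (Real.exp (-l * x y) / Z l) = 1 := by
    intro l
    have hZne : Z l ≠ 0 := (hZpos l).ne'
    simp only [smul_eq_mul, ← mul_div_assoc]
    rw [← Finset.sum_div, div_eq_one_iff_eq hZne]
  have hKLsum : ∀ l : ℝ, 0 < l →
      ∑ y, q y • ((Real.exp (-l * x y) / Z l) * Real.log (Real.exp (-l * x y) / Z l))
        = KL l := by
    intro l hl
    apply Finset.sum_congr rfl
    intro y _
    rw [hpq l y, hp, smul_eq_mul]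
    ring
  have hmem : ∀ (l : ℝ) (y : Y), Real.exp (-l * x y) / Z l ∈ Set.Ici (0:ℝ) := by
    intro l y
    exact Set.mem_Ici.2 (div_nonneg (Real.exp_pos _).le (hZpos l).le)
  have hKLnn : ∀ l : ℝ, 0 < l → 0 ≤ KL l := by
    intro l hl
    have h := Real.convexOn_mul_log.map_sum_le (t := Finset.univ) (w := q)
      (p := fun y => Real.exp (-l * x y) / Z l)
      (fun y _ => (hq_pos y).le) hq_sum (fun y _ => hmem l y)
    rw [hsum1 l] at h
    simp only [Real.log_one, mul_zero, one_mul] at h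
    rw [← hKLsum l hl]
    exact h
  have hKLpos : (∃ y z : Y, x y ≠ x z) → ∀ l : ℝ, 0 < l → 0 < KL l := by
    rintro ⟨y, z, hyz⟩ l hl
    have h := Real.strictConvexOn_mul_log.map_sum_lt (t := Finset.univ) (w := q)
      (p := fun y => Real.exp (-l * x y) / Z l)
      (fun y _ => hq_pos y) hq_sum (fun y _ => hmem l y)
      ⟨y, Finset.mem_univ y, z, Finset.mem_univ z, by
        have hZne : Z l ≠ 0 := (hZpos l).ne'
        simp only [div_eq_div_iff hZne hZne, ne_eq]
        intro hc
        have hc2 := mul_right_cancel₀ hZne hc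
        have h2 : -l * x y = -l * x z := Real.exp_injective hc2
        have h3 : x y = x z := by
          have := mul_left_cancel₀ (neg_ne_zero.mpr hl.ne') h2
          exact this
        exact hyz h3⟩
    rw [hsum1 l] at h
    simp only [Real.log_one, mul_zero, one_mul] at h
    rw [← hKLsum l hl]
    exact h
  refine ⟨?_, hd, ?_⟩
  · apply antitoneOn_of_hasDerivWithinAt_nonpos (f' := fun l => -(1 / l ^ 2) * KL l)
      (convex_Ioi 0)
    · intro l hl
      exact ((hd l hl).continuousAt).continuousWithinAt
    · intro l hl
      rw [interior_Ioi] at hl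
      exact ((hd l hl).hasDerivWithinAt)
    · intro l hl
      rw [interior_Ioi] at hl
      have hl' : 0 < l := hl
      have h1 : (0:ℝ) ≤ 1 / l ^ 2 := by positivity
      have := hKLnn l hl'
      nlinarith
  · intro hx
    apply strictAntiOn_of_hasDerivWithinAt_neg (f' := fun l => -(1 / l ^ 2) * KL l)
      (convex_Ioi 0)
    · intro l hl
      exact ((hd l hl).continuousAt).continuousWithinAt
    · intro l hl
      rw [interior_Ioi] at hl
      exact ((hd l hl).hasDerivWithinAt)
    · intro l hl
      rw [interior_Ioi] at hl
      have hl' : 0 < l := hl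
      have h1 : (0:ℝ) < 1 / l ^ 2 := by positivity
      have := hKLpos hx l hl'
      nlinarith
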